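/- Fix the shared-seed coordinated sampling setup and a function f : V → ℝ_{≥0}. The J estimator is nonnegative (f̂^{(J)}(u,v) ≥ 0 for all u ∈ (0,1] and v ∈ V) and satisfies, for every ρ ∈ (0,1] and every v ∈ V, ∫_ρ^1 f̂^{(J)}(u,v) du ≤ f̲(ρ,v). -/

import Mathlib

open MeasureTheory Set Filter Topology

noncomputable section

/-- A shared-seed coordinated sampling scheme on a data domain `V ⊆ ℝ_{≥0}^r`:
continuous non-decreasing seed-to-threshold maps `τ i : [0,1] → ℝ` whose range
infimum is at most the infimum of the `i`-th coordinate over the domain. -/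
structure CoordScheme (r : ℕ) where
  V : Set (Fin r → ℝ)
  τ : Fin r → ℝ → ℝ
  V_nonneg : ∀ v ∈ V, ∀ i, 0 ≤ v i
  τ_cont : ∀ i, ContinuousOn (τ i) (Set.Icc 0 1)
  τ_mono : ∀ i, MonotoneOn (τ i) (Set.Icc 0 1)
  τ_inf : ∀ i, sInf (τ i '' Set.Icc 0 1) ≤ sInf ((fun v => v i) '' V)

namespace CoordScheme

variable {r : ℕ}

/-- The set `S(u,v)` of sampled entries: `i` is sampled iff `v i ≥ τ i u`. -/
def sampled (C : CoordScheme r) (u : ℝ) (v : Fin r → ℝ) : Set (Fin r) :=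
  {i | C.τ i u ≤ v i}

/-- The consistent set `V*(u,v)` of data vectors consistent with the outcome `S(u,v)`. -/
def Vstar (C : CoordScheme r) (u : ℝ) (v : Fin r → ℝ) : Set (Fin r → ℝ) :=
  {z ∈ C.V | ∀ i, (C.τ i u ≤ v i → z i = v i) ∧ (v i < C.τ i u → z i < C.τ i u)}

/-- The lower bound function `f̲(u,v) = inf { f z : z ∈ V*(u,v) }`. -/
def lb (C : CoordScheme r) (f : (Fin r → ℝ) → ℝ) (u : ℝ) (v : Fin r → ℝ) : ℝ :=
  sInf (f '' C.Vstar u v)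

/-- An estimator: an integrable function of the outcome (it takes equal values on
data vectors consistent with the same outcome). -/
structure IsEstimator (C : CoordScheme r) (fhat : ℝ → (Fin r → ℝ) → ℝ) : Prop where
  integrable : ∀ v ∈ C.V, IntegrableOn (fun u => fhat u v) (Set.Ioc (0:ℝ) 1)
  consistent : ∀ u ∈ Set.Ioc (0:ℝ) 1, ∀ v ∈ C.V, ∀ z ∈ C.Vstar u v, fhat u v = fhat u z

/-- A nonnegative estimator. -/
def Nonneg (C : CoordScheme r) (fhat : ℝ → (Fin r → ℝ) → ℝ) : Prop :=
  ∀ u ∈ Set.Ioc (0:ℝ) 1, ∀ v ∈ C.V, 0 ≤ fhat u v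

/-- An unbiased estimator of `f`. -/
def Unbiased (C : CoordScheme r) (f : (Fin r → ℝ) → ℝ)
    (fhat : ℝ → (Fin r → ℝ) → ℝ) : Prop :=
  ∀ v ∈ C.V, (∫ u in Set.Ioc (0:ℝ) 1, fhat u v) = f v

end CoordScheme

/-- Lower convex hull of `g` on `(0,1]`: the pointwise largest convex function
bounded above by `g` there. -/
def lowerHull (g : ℝ → ℝ) (u : ℝ) : ℝ :=
  sSup {y : ℝ | ∃ h : ℝ → ℝ, ConvexOn ℝ (Set.Ioc (0:ℝ) 1) h ∧
      (∀ x ∈ Set.Ioc (0:ℝ) 1, h x ≤ g x) ∧ y = h u}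

namespace CoordScheme

variable {r : ℕ}

/-- The `v`-optimal estimates: the negated derivative of the lower hull of the
lower-bound function `u ↦ f̲(u,v)`. -/
def optEst (C : CoordScheme r) (f : (Fin r → ℝ) → ℝ) (v : Fin r → ℝ) (u : ℝ) : ℝ :=
  -deriv (lowerHull (fun x => C.lb f x v)) u

/-- Cumulative integral `∫_{2^{-j}}^1` of the J estimator (by its defining recursion):
`Jint (j+1) = Jint j + (value on `(2^{-j-1},2^{-j}]`) ⬝ 2^{-j-1}`. -/
def Jint (C : CoordScheme r) (f : (Fin r → ℝ) → ℝ) (v : Fin r → ℝ) : ℕ → ℝ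
  | 0 => 0
  | (j+1) => Jint C f v j +
      ((2:ℝ) ^ (j+1) * (C.lb f ((2:ℝ) ^ (-(j:ℤ))) v - Jint C f v j)) * (2:ℝ) ^ (-(j:ℤ) - 1)

/-- The (constant) value of the J estimator on the dyadic interval `(2^{-j-1}, 2^{-j}]`.
For `j = 0` this is `2 ⬝ f̲(1,v)`; for `j ≥ 1` it is
`2^{j+1} ⬝ ( f̲(2^{-j},v) − ∫_{2^{-j}}^1 f̂⁽ᴶ⁾(x,v) dx )`. -/
def Jval (C : CoordScheme r) (f : (Fin r → ℝ) → ℝ) (v : Fin r → ℝ) (j : ℕ) : ℝ :=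
  (2:ℝ) ^ (j+1) * (C.lb f ((2:ℝ) ^ (-(j:ℤ))) v - Jint C f v j)

/-- The J estimator `f̂⁽ᴶ⁾(u,v)`: on `u ∈ (2^{-j-1}, 2^{-j}]` it takes the value `Jval j`. -/
def Jest (C : CoordScheme r) (f : (Fin r → ℝ) → ℝ) (u : ℝ) (v : Fin r → ℝ) : ℝ :=
  C.Jval f v ⌊-Real.logb 2 u⌋₊

end CoordScheme


namespace CoordScheme

variable {r : ℕ} (C : CoordScheme r) (f : (Fin r → ℝ) → ℝ)

lemma Vstar_subset (u : ℝ) (v : Fin r → ℝ) : C.Vstar u v ⊆ C.V := fun _ hz => hz.1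

lemma self_mem_Vstar {v : Fin r → ℝ} (hv : v ∈ C.V) (u : ℝ) : v ∈ C.Vstar u v :=
  ⟨hv, fun _ => ⟨fun _ => rfl, fun h => h⟩⟩

lemma lb_nonneg (hf : ∀ v ∈ C.V, 0 ≤ f v) (u : ℝ) (v : Fin r → ℝ) : 0 ≤ C.lb f u v := by
  apply Real.sInf_nonneg
  rintro x ⟨z, hz, rfl⟩
  exact hf z (C.Vstar_subset u v hz)

lemma Vstar_mono {u u' : ℝ} (hu'0 : 0 ≤ u') (h : u' ≤ u) (hu : u ≤ 1) (v : Fin r → ℝ) :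
    C.Vstar u' v ⊆ C.Vstar u v := by
  rintro z ⟨hzV, hz⟩
  refine ⟨hzV, fun i => ?_⟩
  have hτ : C.τ i u' ≤ C.τ i u :=
    C.τ_mono i ⟨hu'0, h.trans hu⟩ ⟨hu'0.trans h, hu⟩ h
  constructor
  · intro hle
    exact (hz i).1 (hτ.trans hle)
  · intro hlt
    rcases lt_or_ge (v i) (C.τ i u') with h1 | h1
    · exact ((hz i).2 h1).trans_le hτ
    · rw [(hz i).1 h1]; exact hlt

lemma lb_anti (hf : ∀ v ∈ C.V, 0 ≤ f v) {u u' : ℝ} (hu'0 : 0 ≤ u') (h : u' ≤ u) (hu : u ≤ 1)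
    {v : Fin r → ℝ} (hv : v ∈ C.V) : C.lb f u v ≤ C.lb f u' v := by
  apply csInf_le_csInf
  · exact ⟨0, by rintro x ⟨z, hz, rfl⟩; exact hf z (C.Vstar_subset _ _ hz)⟩
  · exact ⟨f v, ⟨v, C.self_mem_Vstar hv _, rfl⟩⟩
  · exact Set.image_mono (C.Vstar_mono hu'0 h hu v)

lemma two_pow_mul (j : ℕ) : (2:ℝ) ^ (j+1) * (2:ℝ) ^ (-(j:ℤ)-1) = 1 := by
  rw [← zpow_natCast (2:ℝ) (j+1), ← zpow_add₀ (two_ne_zero : (2:ℝ) ≠ 0)]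
  have : ((j+1:ℕ):ℤ) + (-(j:ℤ)-1) = 0 := by push_cast; ring
  rw [this, zpow_zero]

lemma Jint_succ (v : Fin r → ℝ) (j : ℕ) :
    C.Jint f v (j+1) = C.lb f ((2:ℝ)^(-(j:ℤ))) v := by
  have h := two_pow_mul j
  show C.Jint f v j + ((2:ℝ) ^ (j+1) * (C.lb f ((2:ℝ) ^ (-(j:ℤ))) v - C.Jint f v j))
      * (2:ℝ) ^ (-(j:ℤ) - 1) = _
  linear_combination (C.lb f ((2:ℝ)^(-(j:ℤ))) v - C.Jint f v j) * h

lemma Jval_nonneg (hf : ∀ v ∈ C.V, 0 ≤ f v) {v : Fin r → ℝ} (hv : v ∈ C.V) (j : ℕ) :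
    0 ≤ C.Jval f v j := by
  cases j with
  | zero =>
    have h0 := C.lb_nonneg f hf ((2:ℝ)^(-((0:ℕ):ℤ))) v
    show (0:ℝ) ≤ (2:ℝ) ^ (0+1) * (C.lb f ((2:ℝ) ^ (-((0:ℕ):ℤ))) v - C.Jint f v 0)
    have : C.Jint f v 0 = 0 := rfl
    rw [this, sub_zero]
    exact mul_nonneg (by positivity) h0
  | succ j =>
    show (0:ℝ) ≤ (2:ℝ) ^ (j+1+1) * (C.lb f ((2:ℝ) ^ (-((j+1:ℕ):ℤ))) v - C.Jint f v (j+1))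
    rw [C.Jint_succ f v j]
    have hcast : (-((j+1:ℕ):ℤ)) = -(j:ℤ)-1 := by push_cast; ring
    have h1 : (0:ℝ) ≤ (2:ℝ)^(-(j:ℤ)-1) := by positivity
    have h2 : (2:ℝ)^(-(j:ℤ)-1) ≤ (2:ℝ)^(-(j:ℤ)) :=
      zpow_le_zpow_right₀ one_le_two (by omega)
    have h3 : (2:ℝ)^(-(j:ℤ)) ≤ 1 := zpow_le_one_of_nonpos₀ one_le_two (by omega)
    have hle := C.lb_anti f hf h1 h2 h3 hv
    rw [hcast]
    exact mul_nonneg (by positivity) (by linarith)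

lemma floor_log_eq {j : ℕ} {u : ℝ} (h1 : (2:ℝ)^(-(j:ℤ)-1) < u) (h2 : u ≤ (2:ℝ)^(-(j:ℤ))) :
    ⌊-Real.logb 2 u⌋₊ = j := by
  have hu : 0 < u := lt_trans (by positivity) h1
  have hj : (0:ℝ) ≤ (j:ℝ) := Nat.cast_nonneg j
  have e1 : Real.logb 2 u ≤ -(j:ℝ) := by
    rw [show (-(j:ℝ)) = ((-(j:ℤ) : ℤ):ℝ) by push_cast; ring,
      Real.logb_le_iff_le_rpow one_lt_two hu, Real.rpow_intCast]
    exact h2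
  have e2 : -(j:ℝ)-1 < Real.logb 2 u := by
    rw [show (-(j:ℝ)-1) = ((-(j:ℤ)-1 : ℤ):ℝ) by push_cast; ring,
      Real.lt_logb_iff_rpow_lt one_lt_two hu, Real.rpow_intCast]
    exact h1
  rw [Nat.floor_eq_iff (by linarith)]
  constructor
  · linarith
  · push_cast; linarith

lemma eqOn_piece (v : Fin r → ℝ) (j : ℕ) {a b : ℝ} (ha : (2:ℝ)^(-(j:ℤ)-1) ≤ a)
    (hb : b ≤ (2:ℝ)^(-(j:ℤ))) :
    Set.EqOn (fun u => C.Jest f u v) (fun _ => C.Jval f v j) (Set.Ioc a b) := by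
  intro u hu
  show C.Jval f v ⌊-Real.logb 2 u⌋₊ = _
  rw [floor_log_eq (lt_of_le_of_lt ha hu.1) (hu.2.trans hb)]

lemma integrableOn_piece (v : Fin r → ℝ) (j : ℕ) {a b : ℝ} (ha : (2:ℝ)^(-(j:ℤ)-1) ≤ a)
    (hb : b ≤ (2:ℝ)^(-(j:ℤ))) :
    MeasureTheory.IntegrableOn (fun u => C.Jest f u v) (Set.Ioc a b) :=
  MeasureTheory.IntegrableOn.congr_fun
    (MeasureTheory.integrableOn_const measure_Ioc_lt_top.ne)
    (C.eqOn_piece f v j ha hb).symm measurableSet_Ioc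

lemma integral_piece (v : Fin r → ℝ) (j : ℕ) {a b : ℝ} (ha : (2:ℝ)^(-(j:ℤ)-1) ≤ a)
    (hb : b ≤ (2:ℝ)^(-(j:ℤ))) (hab : a ≤ b) :
    (∫ u in Set.Ioc a b, C.Jest f u v) = (b - a) * C.Jval f v j := by
  rw [MeasureTheory.setIntegral_congr_fun measurableSet_Ioc (C.eqOn_piece f v j ha hb),
    MeasureTheory.setIntegral_const, Real.volume_real_Ioc_of_le hab,
    smul_eq_mul]

lemma two_pow_split (j : ℕ) : (2:ℝ)^(-(j:ℤ)) = 2 * (2:ℝ)^(-(j:ℤ)-1) := by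
  have h : (-(j:ℤ)) = (-(j:ℤ)-1) + 1 := by ring
  rw [h, zpow_add_one₀ (two_ne_zero : (2:ℝ) ≠ 0)]
  ring

lemma integral_Jest (v : Fin r → ℝ) : ∀ j : ℕ,
    MeasureTheory.IntegrableOn (fun u => C.Jest f u v) (Set.Ioc ((2:ℝ)^(-(j:ℤ))) 1) ∧
    (∫ u in Set.Ioc ((2:ℝ)^(-(j:ℤ))) 1, C.Jest f u v) = C.Jint f v j
  | 0 => by
    have h : (2:ℝ)^(-((0:ℕ):ℤ)) = 1 := by norm_num
    rw [h, Set.Ioc_self]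
    refine ⟨MeasureTheory.integrableOn_empty, ?_⟩
    simp [Jint]
  | (j+1) => by
    obtain ⟨ih_int, ih_eq⟩ := integral_Jest v j
    have hcast : (-((j+1:ℕ):ℤ)) = -(j:ℤ)-1 := by push_cast; ring
    have h1 : (2:ℝ)^(-(j:ℤ)-1) ≤ (2:ℝ)^(-(j:ℤ)) :=
      zpow_le_zpow_right₀ one_le_two (by omega)
    have h2 : (2:ℝ)^(-(j:ℤ)) ≤ 1 := zpow_le_one_of_nonpos₀ one_le_two (by omega)
    have key : Set.Ioc ((2:ℝ)^(-((j+1:ℕ):ℤ))) 1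
        = Set.Ioc ((2:ℝ)^(-(j:ℤ)-1)) ((2:ℝ)^(-(j:ℤ))) ∪ Set.Ioc ((2:ℝ)^(-(j:ℤ))) 1 := by
      rw [hcast, Set.Ioc_union_Ioc_eq_Ioc h1 h2]
    have hpiece := C.integrableOn_piece f v j (le_refl ((2:ℝ)^(-(j:ℤ)-1))) (le_refl _)
    constructor
    · rw [key]
      exact hpiece.union ih_int
    · rw [key, MeasureTheory.setIntegral_union (Set.Ioc_disjoint_Ioc_of_le le_rfl) measurableSet_Ioc
        hpiece ih_int,
        C.integral_piece f v j (le_refl _) (le_refl _) h1, ih_eq]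
      show _ = C.Jint f v j + ((2:ℝ) ^ (j+1) * (C.lb f ((2:ℝ) ^ (-(j:ℤ))) v - C.Jint f v j))
          * (2:ℝ) ^ (-(j:ℤ) - 1)
      have hs := CoordScheme.two_pow_split j
      show ((2:ℝ)^(-(j:ℤ)) - (2:ℝ)^(-(j:ℤ)-1)) * C.Jval f v j + C.Jint f v j = _
      show _ = C.Jint f v j + C.Jval f v j * (2:ℝ) ^ (-(j:ℤ) - 1)
      rw [hs]; ring

end CoordScheme

/-- the J estimator is nonnegative and satisfies
`∫_ρ^1 f̂⁽ᴶ⁾(u,v) du ≤ f̲(ρ,v)` for every `ρ ∈ (0,1]` and `v ∈ V`. -/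
theorem stmt11 {r : ℕ} (C : CoordScheme r) (f : (Fin r → ℝ) → ℝ)
    (hf : ∀ v ∈ C.V, 0 ≤ f v) :
    (∀ u ∈ Set.Ioc (0:ℝ) 1, ∀ v ∈ C.V, 0 ≤ C.Jest f u v) ∧
    (∀ ρ ∈ Set.Ioc (0:ℝ) 1, ∀ v ∈ C.V,
      (∫ u in Set.Ioc ρ 1, C.Jest f u v) ≤ C.lb f ρ v) :=  by
  constructor
  · intro u _ v hv
    exact C.Jval_nonneg f hf hv _
  · intro ρ hρ v hv
    set j := ⌊-Real.logb 2 ρ⌋₊ with hjdef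
    have hρ0 := hρ.1
    have hnn : 0 ≤ -Real.logb 2 ρ := by
      have := Real.logb_nonpos one_lt_two hρ0.le hρ.2
      linarith
    have hf1 : (j:ℝ) ≤ -Real.logb 2 ρ := Nat.floor_le hnn
    have hf2 : -Real.logb 2 ρ < j + 1 := Nat.lt_floor_add_one _
    have h1 : (2:ℝ)^(-(j:ℤ)-1) < ρ := by
      have : ((-(j:ℤ)-1 : ℤ):ℝ) < Real.logb 2 ρ := by push_cast; linarith
      have := (Real.lt_logb_iff_rpow_lt one_lt_two hρ0).mp this
      rwa [Real.rpow_intCast] at this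
    have h2 : ρ ≤ (2:ℝ)^(-(j:ℤ)) := by
      have : Real.logb 2 ρ ≤ ((-(j:ℤ) : ℤ):ℝ) := by push_cast; linarith
      have := (Real.logb_le_iff_le_rpow one_lt_two hρ0).mp this
      rwa [Real.rpow_intCast] at this
    have hle1 : (2:ℝ)^(-(j:ℤ)) ≤ 1 := zpow_le_one_of_nonpos₀ one_le_two (by omega)
    obtain ⟨iint, ieq⟩ := CoordScheme.integral_Jest C f v j
    have hsplit : Set.Ioc ρ 1 = Set.Ioc ρ ((2:ℝ)^(-(j:ℤ))) ∪ Set.Ioc ((2:ℝ)^(-(j:ℤ))) 1 :=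
      (Set.Ioc_union_Ioc_eq_Ioc h2 hle1).symm
    rw [hsplit, MeasureTheory.setIntegral_union (Set.Ioc_disjoint_Ioc_of_le le_rfl) measurableSet_Ioc
      (C.integrableOn_piece f v j h1.le (le_refl _)) iint,
      C.integral_piece f v j h1.le (le_refl _) h2, ieq]
    have hJv := C.Jval_nonneg f hf hv j
    have hkey : C.Jint f v j + C.Jval f v j * (2:ℝ)^(-(j:ℤ)-1) = C.lb f ((2:ℝ)^(-(j:ℤ))) v := by
      have h := C.Jint_succ f v j
      rw [show C.Jint f v (j+1) = C.Jint f v j + ((2:ℝ) ^ (j+1)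
        * (C.lb f ((2:ℝ) ^ (-(j:ℤ))) v - C.Jint f v j)) * (2:ℝ) ^ (-(j:ℤ) - 1) from rfl] at h
      rw [show C.Jval f v j = (2:ℝ) ^ (j+1)
        * (C.lb f ((2:ℝ) ^ (-(j:ℤ))) v - C.Jint f v j) from rfl]
      linarith
    have hlb : C.lb f ((2:ℝ)^(-(j:ℤ))) v ≤ C.lb f ρ v := C.lb_anti f hf hρ0.le h2 hle1 hv
    have hs := CoordScheme.two_pow_split j
    have hd : (2:ℝ)^(-(j:ℤ)) - ρ ≤ (2:ℝ)^(-(j:ℤ)-1) := by linarith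
    nlinarith [mul_le_mul_of_nonneg_right hd hJv]
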